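/- arXiv:2309.15229 — 7 statements merged into one kernel-verified Lean document; each statement's English description precedes it below -/
import Mathlib

section
/- Let Φ be a Young function, finite-valued and nonzero outside the origin. Then p_Φ = sup_{t>0} tΦ'₊(t)/Φ(t) = 1 if and only if Φ is linear, i.e. Φ(t) = Ct for some constant C > 0. -/
open Filter Set

private lemma right_deriv_exists (Φ : ℝ → ℝ) (hconv : ConvexOn ℝ (Set.Ici 0) Φ)
    {t : ℝ} (ht : 0 < t) :
    HasDerivWithinAt Φ (sInf (slope Φ t '' Ioi t)) (Ioi t) t := by
  have htmem : t ∈ Set.Ici (0 : ℝ) := le_of_lt ht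
  have h0mem : (0 : ℝ) ∈ Set.Ici (0 : ℝ) \ {t} := ⟨Set.self_mem_Ici, by simp [ht.ne]⟩
  have hsub : Ioi t ⊆ Set.Ici (0 : ℝ) \ {t} := fun u hu => ⟨le_of_lt (ht.trans hu), ne_of_gt hu⟩
  have hmono : MonotoneOn (slope Φ t) (Ioi t) := (hconv.slope_mono htmem).mono hsub
  have hbdd : BddBelow (slope Φ t '' Ioi t) := by
    refine ⟨slope Φ t 0, ?_⟩
    rintro r ⟨u, hu, rfl⟩
    exact hconv.slope_mono htmem h0mem (hsub hu) (le_of_lt (ht.trans hu))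
  have := hmono.tendsto_nhdsGT hbdd
  exact (hasDerivWithinAt_iff_tendsto_slope' self_notMem_Ioi).2 this

private lemma right_deriv_facts (Φ : ℝ → ℝ) (hconv : ConvexOn ℝ (Set.Ici 0) Φ)
    {t : ℝ} (ht : 0 < t) :
    slope Φ 0 t ≤ derivWithin Φ (Set.Ici t) t ∧
      ∀ s, 0 ≤ s → s < t → slope Φ s t ≤ derivWithin Φ (Set.Ici t) t := by
  have hder := right_deriv_exists Φ hconv ht
  have hval : derivWithin Φ (Set.Ici t) t = sInf (slope Φ t '' Ioi t) := by
    rw [← derivWithin_Ioi_eq_Ici]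
    exact hder.derivWithin (uniqueDiffWithinAt_Ioi t)
  have key : ∀ s, 0 ≤ s → s < t → slope Φ s t ≤ derivWithin Φ (Set.Ici t) t := by
    intro s hs hst
    rw [hval]
    refine le_csInf ((Set.nonempty_Ioi (a := t)).image _) ?_
    rintro r ⟨u, hu, rfl⟩
    rw [slope_comm]
    exact hconv.slope_mono (le_of_lt ht) ⟨hs, ne_of_lt hst⟩
      ⟨le_of_lt (ht.trans hu), ne_of_gt hu⟩ (le_of_lt (hst.trans hu))
  exact ⟨key 0 le_rfl ht, key⟩

/-- For a Young function `Φ`, finite and nonzero outside the origin,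
`p_Φ = sup_{t>0} t Φ'₊(t)/Φ(t) = 1` (expressed via `IsLUB`) iff `Φ` is linear,
i.e. `Φ t = C t` for some `C > 0`. -/
theorem pPhi_eq_one_iff_linear (Φ : ℝ → ℝ)
    (hconv : ConvexOn ℝ (Set.Ici 0) Φ) (h0 : Φ 0 = 0)
    (hnn : ∀ t, 0 ≤ t → 0 ≤ Φ t) (hlim : Tendsto Φ atTop atTop)
    (hpos : ∀ t, 0 < t → 0 < Φ t) :
    IsLUB {r : ℝ | ∃ t : ℝ, 0 < t ∧ r = t * derivWithin Φ (Set.Ici t) t / Φ t} 1 ↔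
      ∃ C : ℝ, 0 < C ∧ ∀ t, 0 ≤ t → Φ t = C * t := by
  constructor
  · intro hlub
    have hD : ∀ t : ℝ, 0 < t → derivWithin Φ (Set.Ici t) t = Φ t / t := by
      intro t ht
      have hΦ := hpos t ht
      have hslope : slope Φ 0 t = Φ t / t := by
        rw [slope_def_field, h0, sub_zero, sub_zero]
      have h1 : Φ t / t ≤ derivWithin Φ (Set.Ici t) t :=
        hslope ▸ (right_deriv_facts Φ hconv ht).1
      have h2 : t * derivWithin Φ (Set.Ici t) t / Φ t ≤ 1 := hlub.1 ⟨t, ht, rfl⟩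
      have h2' : t * derivWithin Φ (Set.Ici t) t ≤ Φ t := (div_le_one hΦ).1 h2
      refine le_antisymm ((le_div_iff₀ ht).2 (by nlinarith)) h1
    have hprop : ∀ s t : ℝ, 0 < s → s < t → Φ s * t = Φ t * s := by
      intro s t hs hst
      have ht : 0 < t := hs.trans hst
      have hf := (right_deriv_facts Φ hconv ht).2 s hs.le hst
      rw [hD t ht] at hf
      have hslope0 : slope Φ 0 t = Φ t / t := by
        rw [slope_def_field, h0, sub_zero, sub_zero]
      have hge : slope Φ 0 t ≤ slope Φ s t := by
        rw [slope_comm Φ 0 t, slope_comm Φ s t]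
        exact hconv.slope_mono ht.le ⟨Set.self_mem_Ici, by simp [ht.ne]⟩
          ⟨hs.le, ne_of_lt hst⟩ hs.le
      have heq : slope Φ s t = Φ t / t := le_antisymm hf (hslope0 ▸ hge)
      rw [slope_def_field] at heq
      have h3 : (Φ t - Φ s) * t = Φ t * (t - s) :=
        (div_eq_div_iff (sub_pos.mpr hst).ne' ht.ne').1 heq
      linear_combination -h3
    refine ⟨Φ 1, hpos 1 one_pos, fun t htnn => ?_⟩
    rcases htnn.lt_or_eq with ht | ht
    · rcases lt_trichotomy t 1 with h | h | h
      · have := hprop t 1 ht h; linarith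
      · rw [h]; ring
      · have := hprop 1 t one_pos h; linarith
    · rw [← ht, h0]; ring
  · rintro ⟨C, hC, hlin⟩
    have hone : ∀ t : ℝ, 0 < t → t * derivWithin Φ (Set.Ici t) t / Φ t = 1 := by
      intro t ht
      have hder : derivWithin Φ (Set.Ici t) t = C := by
        have h1 : Set.EqOn Φ (fun x => C * x) (Set.Ici t) := fun x hx =>
          hlin x (le_trans ht.le hx)
        rw [derivWithin_congr h1 (hlin t ht.le)]
        have := (((hasDerivAt_id t).const_mul C).hasDerivWithinAt).derivWithin
          (uniqueDiffOn_Ici t t Set.self_mem_Ici)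
        simpa using this
      rw [hder, hlin t ht.le]
      field_simp
    have hset : {r : ℝ | ∃ t : ℝ, 0 < t ∧ r = t * derivWithin Φ (Set.Ici t) t / Φ t} = {1} := by
      ext r
      simp only [Set.mem_setOf_eq, Set.mem_singleton_iff]
      constructor
      · rintro ⟨t, ht, rfl⟩; exact hone t ht
      · rintro rfl; exact ⟨1, one_pos, (hone 1 one_pos).symm⟩
    rw [hset]
    exact isLUB_singleton
end

section
/- Let Φ be a Young function, finite-valued and nonzero outside the origin. Then q_Φ = inf_{t>0} tΦ'₊(t)/Φ(t) > 1 if and only if there exists p > 1 such that t ↦ Φ(t)/t^p is non-decreasing on (0,∞). -/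
open Filter Set Topology

/-- For a Young function `Φ`, finite and nonzero outside the origin,
`q_Φ = inf_{t>0} t Φ'₊(t)/Φ(t) > 1` iff there is `p > 1` such that
`t ↦ Φ(t)/t^p` is non-decreasing on `(0,∞)`. -/
theorem qPhi_gt_one_iff_monotone (Φ : ℝ → ℝ)
    (hconv : ConvexOn ℝ (Set.Ici 0) Φ) (h0 : Φ 0 = 0)
    (hnn : ∀ t, 0 ≤ t → 0 ≤ Φ t) (hlim : Tendsto Φ atTop atTop)
    (hpos : ∀ t, 0 < t → 0 < Φ t) :
    1 < sInf {r : ℝ | ∃ t : ℝ, 0 < t ∧ r = t * derivWithin Φ (Set.Ici t) t / Φ t} ↔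
      ∃ p : ℝ, 1 < p ∧ ∀ t₁ t₂ : ℝ, 0 < t₁ → t₁ ≤ t₂ →
        Φ t₁ / t₁ ^ p ≤ Φ t₂ / t₂ ^ p := by
  set S := {r : ℝ | ∃ t : ℝ, 0 < t ∧ r = t * derivWithin Φ (Set.Ici t) t / Φ t} with hS
  set d : ℝ → ℝ := fun t => sInf (slope Φ t '' Ioi t) with hd_def
  -- existence of the right derivative
  have hd : ∀ t : ℝ, 0 < t → HasDerivWithinAt Φ (d t) (Set.Ici t) t := by
    intro t ht
    have hmem : t ∈ Ici (0:ℝ) := le_of_lt ht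
    have hmono : MonotoneOn (slope Φ t) (Ici 0 \ {t}) := hconv.slope_mono hmem
    have hsub : Ioi t ⊆ Ici 0 \ {t} := fun s hs => ⟨le_of_lt (ht.trans hs), ne_of_gt hs⟩
    have hmono' : MonotoneOn (slope Φ t) (Ioi t) := hmono.mono hsub
    have hbdd : BddBelow (slope Φ t '' Ioi t) := by
      refine ⟨slope Φ t 0, ?_⟩
      rintro r ⟨s, hs, rfl⟩
      exact hmono ⟨Set.self_mem_Ici, (ne_of_gt ht).symm⟩ (hsub hs) (le_of_lt (ht.trans hs))
    have := hmono'.tendsto_nhdsGT hbdd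
    rw [hasDerivWithinAt_iff_tendsto_slope]
    rwa [Set.Ici_sdiff_left]
  have hdw : ∀ t : ℝ, 0 < t → derivWithin Φ (Set.Ici t) t = d t := fun t ht =>
    (hd t ht).derivWithin (uniqueDiffOn_Ici t t Set.self_mem_Ici)
  have hdtendsto : ∀ t : ℝ, 0 < t → Tendsto (slope Φ t) (𝓝[>] t) (𝓝 (d t)) := by
    intro t ht
    have := hasDerivWithinAt_iff_tendsto_slope.mp (hd t ht)
    rwa [Set.Ici_sdiff_left] at this
  -- lower bound d t ≥ Φ t / t
  have hlb : ∀ t : ℝ, 0 < t → Φ t / t ≤ d t := by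
    intro t ht
    have hmono : MonotoneOn (slope Φ t) (Ici 0 \ {t}) := hconv.slope_mono (le_of_lt ht)
    refine le_csInf ⟨slope Φ t (t + 1), ⟨t + 1, lt_add_one t, rfl⟩⟩ ?_
    rintro r ⟨s, hs, rfl⟩
    have h1 : slope Φ t 0 ≤ slope Φ t s :=
      hmono ⟨Set.self_mem_Ici, (ne_of_gt ht).symm⟩ ⟨le_of_lt (ht.trans hs), ne_of_gt hs⟩
        (le_of_lt (ht.trans hs))
    have h2 : slope Φ t 0 = Φ t / t := by
      rw [slope_def_field, h0]
      rw [zero_sub, zero_sub, neg_div_neg_eq]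
    linarith [h1, h2.symm.le]
  have hSlb : ∀ r ∈ S, (1:ℝ) ≤ r := by
    rintro r ⟨t, ht, rfl⟩
    rw [hdw t ht]
    rw [le_div_iff₀ (hpos t ht), one_mul]
    have := hlb t ht
    rw [div_le_iff₀ ht] at this
    linarith [this]
  have hBdd : BddBelow S := ⟨1, hSlb⟩
  have hne : S.Nonempty := ⟨_, 1, one_pos, rfl⟩
  constructor
  · intro h1
    set p := sInf S with hp
    refine ⟨p, h1, ?_⟩
    have key : ∀ t : ℝ, 0 < t → p * Φ t ≤ t * d t := by
      intro t ht
      have hmem : t * d t / Φ t ∈ S := ⟨t, ht, by rw [hdw t ht]⟩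
      have := csInf_le hBdd hmem
      exact (le_div_iff₀ (hpos t ht)).mp this
    intro t₁ t₂ ht₁ hle
    have ht₂ : 0 < t₂ := lt_of_lt_of_le ht₁ hle
    have hIcc : Icc t₁ t₂ ⊆ Ioi 0 := fun x hx => lt_of_lt_of_le ht₁ hx.1
    set B : ℝ → ℝ := fun s => Φ s / s ^ p with hB_def
    set B' : ℝ → ℝ := fun s => (d s * s ^ p - Φ s * (p * s ^ (p - 1))) / (s ^ p) ^ 2
      with hB'_def
    have hΦcont : ContinuousOn Φ (Ioi 0) :=
      (hconv.subset Ioi_subset_Ici_self (convex_Ioi 0)).continuousOn isOpen_Ioi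
    have hBcont : ContinuousOn B (Icc t₁ t₂) := by
      apply ContinuousOn.div ((hΦcont.mono hIcc))
      · intro x hx
        exact (Real.continuousAt_rpow_const x p (Or.inl (ne_of_gt (hIcc hx)))).continuousWithinAt
      · intro x hx
        exact (Real.rpow_pos_of_pos (hIcc hx) p).ne'
    have hB' : ∀ x ∈ Ico t₁ t₂, HasDerivWithinAt B (B' x) (Ici x) x := by
      intro x hx
      have hx0 : 0 < x := lt_of_lt_of_le ht₁ hx.1
      exact (hd x hx0).div
        ((Real.hasDerivAt_rpow_const (Or.inl hx0.ne')).hasDerivWithinAt)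
        (Real.rpow_pos_of_pos hx0 p).ne'
    have hbound : ∀ x ∈ Ico t₁ t₂, (0:ℝ) ≤ B' x := by
      intro x hx
      have hx0 : 0 < x := lt_of_lt_of_le ht₁ hx.1
      apply div_nonneg _ (sq_nonneg _)
      have hp0 : p ≠ 0 := ne_of_gt (lt_trans one_pos h1)
      have hxp : x ^ p = x * x ^ (p - 1) := by
        conv_lhs => rw [show p = 1 + (p - 1) by ring]
        exact Real.rpow_one_add' (le_of_lt hx0)
          (by rw [show (1:ℝ) + (p - 1) = p by ring]; exact hp0)
      have hc : (0:ℝ) ≤ x ^ (p - 1) := Real.rpow_nonneg hx0.le _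
      have h2 := key x hx0
      rw [hxp]
      nlinarith [mul_nonneg hc (sub_nonneg.mpr h2)]
    have := image_le_of_deriv_right_le_deriv_boundary
      (a := t₁) (b := t₂) (f := fun _ => Φ t₁ / t₁ ^ p) (f' := fun _ => 0)
      continuousOn_const (fun x _ => hasDerivWithinAt_const x _ _)
      (le_refl _) hBcont hB' hbound (right_mem_Icc.mpr hle)
    exact this
  · rintro ⟨p, hp1, hmono⟩
    have hkey : ∀ t : ℝ, 0 < t → p * Φ t / t ≤ d t := by
      intro t ht
      have htp : (0:ℝ) < t ^ p := Real.rpow_pos_of_pos ht p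
      set g : ℝ → ℝ := fun s => Φ t / t ^ p * s ^ p with hg_def
      have hg : HasDerivAt g (Φ t / t ^ p * (p * t ^ (p - 1))) t :=
        (Real.hasDerivAt_rpow_const (Or.inl ht.ne')).const_mul _
      have hgt : Tendsto (slope g t) (𝓝[>] t) (𝓝 (Φ t / t ^ p * (p * t ^ (p - 1)))) :=
        (hasDerivAt_iff_tendsto_slope.mp hg).mono_left
          (nhdsWithin_mono t (fun s hs => ne_of_gt hs))
      have hgv : Φ t / t ^ p * (p * t ^ (p - 1)) = p * Φ t / t := by
        rw [Real.rpow_sub ht, Real.rpow_one]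
        field_simp
      rw [hgv] at hgt
      refine le_of_tendsto_of_tendsto hgt (hdtendsto t ht) ?_
      filter_upwards [self_mem_nhdsWithin] with s hs
      have hst : t < s := hs
      have hsp : (0:ℝ) < s ^ p := Real.rpow_pos_of_pos (ht.trans hst) p
      have hgs : g s ≤ Φ s := by
        have := mul_le_mul_of_nonneg_right (hmono t s ht hst.le) (le_of_lt hsp)
        rwa [div_mul_cancel₀ _ hsp.ne'] at this
      have hgt' : g t = Φ t := by
        simp only [hg_def]
        rw [div_mul_cancel₀ _ htp.ne']
      rw [slope_def_field, slope_def_field]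
      apply div_le_div_of_nonneg_right _ (sub_pos.mpr hst).le
      · linarith [hgs, hgt'.symm.le]
    refine lt_of_lt_of_le hp1 (le_csInf hne ?_)
    rintro r ⟨t, ht, rfl⟩
    rw [hdw t ht, le_div_iff₀ (hpos t ht)]
    have := hkey t ht
    rw [div_le_iff₀ ht] at this
    linarith [this]
end

section
/- Let Φ be a Young function, finite-valued and nonzero outside the origin. Then q_Φ > 1 if and only if Φ satisfies the Λ-condition, i.e. there exists p > 1 such that Φ(ct) ≤ c^p·Φ(t) for all t ≥ 0 and all c ∈ (0,1]. -/
open Filter Set Topology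

/-- A convex function on `Ici 0` has a right derivative at every `t > 0`. -/
lemma young_hasDerivWithinAt {Φ : ℝ → ℝ} (hconv : ConvexOn ℝ (Set.Ici 0) Φ)
    {t : ℝ} (ht : 0 < t) :
    HasDerivWithinAt Φ (derivWithin Φ (Set.Ici t) t) (Set.Ici t) t := by
  have hsub : Set.Ioi t ⊆ Set.Ici (0:ℝ) \ {t} :=
    fun u hu => ⟨le_of_lt (ht.trans hu), ne_of_gt hu⟩
  have hmonoFull : MonotoneOn (slope Φ t) (Set.Ici (0:ℝ) \ {t}) :=
    hconv.slope_mono (mem_Ici.mpr ht.le)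
  have hmono : MonotoneOn (slope Φ t) (Set.Ioi t) := hmonoFull.mono hsub
  have h0mem : (0:ℝ) ∈ Set.Ici (0:ℝ) \ {t} := ⟨Set.self_mem_Ici, by simp [ht.ne]⟩
  have hbdd : BddBelow (slope Φ t '' Set.Ioi t) := by
    refine ⟨slope Φ t 0, ?_⟩
    rintro r ⟨u, hu, rfl⟩
    exact hmonoFull h0mem (hsub hu) (le_of_lt (ht.trans hu))
  have htend := hmono.tendsto_nhdsGT hbdd
  have hH : HasDerivWithinAt Φ (sInf (slope Φ t '' Set.Ioi t)) (Set.Ici t) t := by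
    rw [hasDerivWithinAt_iff_tendsto_slope, Set.Ici_sdiff_left]
    exact htend
  exact hH.differentiableWithinAt.hasDerivWithinAt

/-- The slope of a convex function tends to the right derivative. -/
lemma young_tendsto_slope {Φ : ℝ → ℝ} (hconv : ConvexOn ℝ (Set.Ici 0) Φ)
    {t : ℝ} (ht : 0 < t) :
    Tendsto (slope Φ t) (𝓝[>] t) (𝓝 (derivWithin Φ (Set.Ici t) t)) := by
  have h := young_hasDerivWithinAt hconv ht
  rw [hasDerivWithinAt_iff_tendsto_slope, Set.Ici_sdiff_left] at h
  exact h

/-- Lower bound for the right derivative: `Φ t / t ≤ Φ'₊(t)`. -/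
lemma young_slope_le_deriv {Φ : ℝ → ℝ} (hconv : ConvexOn ℝ (Set.Ici 0) Φ)
    (h0 : Φ 0 = 0) {t : ℝ} (ht : 0 < t) :
    Φ t / t ≤ derivWithin Φ (Set.Ici t) t := by
  have hmonoFull : MonotoneOn (slope Φ t) (Set.Ici (0:ℝ) \ {t}) :=
    hconv.slope_mono (mem_Ici.mpr ht.le)
  have h0mem : (0:ℝ) ∈ Set.Ici (0:ℝ) \ {t} := ⟨Set.self_mem_Ici, by simp [ht.ne]⟩
  refine ge_of_tendsto (young_tendsto_slope hconv ht) ?_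
  filter_upwards [self_mem_nhdsWithin] with u hu
  have humem : u ∈ Set.Ici (0:ℝ) \ {t} :=
    ⟨le_of_lt (ht.trans hu), ne_of_gt hu⟩
  have h1 : slope Φ t 0 ≤ slope Φ t u :=
    hmonoFull h0mem humem (le_of_lt (ht.trans hu))
  have h2 : slope Φ t 0 = Φ t / t := by
    rw [slope_def_field, h0]
    rw [zero_sub, zero_sub, neg_div_neg_eq]
  exact h2 ▸ h1

/-- For a Young function `Φ`, finite and nonzero outside the origin,
`q_Φ = inf_{t>0} t Φ'₊(t)/Φ(t) > 1` iff `Φ` satisfies the `Λ`-condition: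
there is `p > 1` with `Φ(ct) ≤ c^p Φ(t)` for all `t ≥ 0`, `c ∈ (0,1]`. -/
theorem qPhi_gt_one_iff_Lambda (Φ : ℝ → ℝ)
    (hconv : ConvexOn ℝ (Set.Ici 0) Φ) (h0 : Φ 0 = 0)
    (hnn : ∀ t, 0 ≤ t → 0 ≤ Φ t) (hlim : Tendsto Φ atTop atTop)
    (hpos : ∀ t, 0 < t → 0 < Φ t) :
    1 < sInf {r : ℝ | ∃ t : ℝ, 0 < t ∧ r = t * derivWithin Φ (Set.Ici t) t / Φ t} ↔
      ∃ p : ℝ, 1 < p ∧ ∀ t : ℝ, 0 ≤ t → ∀ c : ℝ, 0 < c → c ≤ 1 →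
        Φ (c * t) ≤ c ^ p * Φ t := by
  set S : Set ℝ := {r : ℝ | ∃ t : ℝ, 0 < t ∧ r = t * derivWithin Φ (Set.Ici t) t / Φ t} with hS
  have hbddS : BddBelow S := by
    refine ⟨1, ?_⟩
    rintro r ⟨t, ht, rfl⟩
    have hΦt := hpos t ht
    have hd := young_slope_le_deriv hconv h0 ht
    rw [le_div_iff₀ hΦt, one_mul]
    calc Φ t = t * (Φ t / t) := by field_simp
    _ ≤ t * derivWithin Φ (Set.Ici t) t := by
        exact mul_le_mul_of_nonneg_left hd ht.le
  constructor
  · intro hq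
    set q := sInf S with hqdef
    refine ⟨q, hq, ?_⟩
    intro t ht c hc hc1
    rcases eq_or_lt_of_le ht with h | ht
    · have hcq : (0:ℝ) ≤ c ^ q := (Real.rpow_pos_of_pos hc q).le
      simp only [← h, mul_zero, h0]
      simp
    -- t > 0 now
    set a := c * t with ha
    have ha0 : 0 < a := mul_pos hc ht
    have hat : a ≤ t := by
      calc a = c * t := rfl
      _ ≤ 1 * t := mul_le_mul_of_nonneg_right hc1 ht.le
      _ = t := one_mul t
    -- key inequality : q * Φ x ≤ x * D x for x > 0
    have hkey : ∀ x : ℝ, 0 < x → q * Φ x ≤ x * derivWithin Φ (Set.Ici x) x := by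
      intro x hx
      have hmem : x * derivWithin Φ (Set.Ici x) x / Φ x ∈ S := ⟨x, hx, rfl⟩
      have := csInf_le hbddS hmem
      rw [le_div_iff₀ (hpos x hx)] at this
      linarith
    -- B x = Φ x * x ^ (-q)
    set B : ℝ → ℝ := fun x => Φ x * x ^ (-q) with hB
    set B' : ℝ → ℝ := fun x =>
      derivWithin Φ (Set.Ici x) x * x ^ (-q) + Φ x * (-q * x ^ (-q - 1)) with hB'
    have hBmono : B a ≤ B t := by
      have hconB : ContinuousOn B (Set.Icc a t) := by
        apply ContinuousOn.mul
        · apply (hconv.continuousOn_interior).mono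
          intro x hx
          rw [interior_Ici]
          exact lt_of_lt_of_le ha0 hx.1
        · intro x hx
          exact (Real.continuousAt_rpow_const x (-q)
            (Or.inl (ne_of_gt (lt_of_lt_of_le ha0 hx.1)))).continuousWithinAt
      have hderB : ∀ x ∈ Set.Ico a t, HasDerivWithinAt B (B' x) (Set.Ici x) x := by
        intro x hx
        have hx0 : 0 < x := lt_of_lt_of_le ha0 hx.1
        exact (young_hasDerivWithinAt hconv hx0).mul
          ((Real.hasDerivAt_rpow_const (Or.inl hx0.ne')).hasDerivWithinAt)
      have hbound : ∀ x ∈ Set.Ico a t, (0:ℝ) ≤ B' x := by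
        intro x hx
        have hx0 : 0 < x := lt_of_lt_of_le ha0 hx.1
        have hq1 : q * Φ x ≤ x * derivWithin Φ (Set.Ici x) x := hkey x hx0
        have hxq : (0:ℝ) < x ^ (-q) := Real.rpow_pos_of_pos hx0 _
        have hsub1 : x ^ (-q - 1) = x ^ (-q) / x := by
          rw [← Real.rpow_sub_one hx0.ne' (-q)]
        have key2 : q * Φ x * x ^ (-q - 1) ≤ derivWithin Φ (Set.Ici x) x * x ^ (-q) := by
          rw [hsub1]
          have h3 : q * Φ x * (x ^ (-q) / x) = q * Φ x * x ^ (-q) / x := by ring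
          rw [h3, div_le_iff₀ hx0]
          calc q * Φ x * x ^ (-q) ≤ x * derivWithin Φ (Set.Ici x) x * x ^ (-q) :=
                mul_le_mul_of_nonneg_right hq1 hxq.le
          _ = derivWithin Φ (Set.Ici x) x * x ^ (-q) * x := by ring
        simp only [hB']
        nlinarith [key2]
      have := image_le_of_deriv_right_le_deriv_boundary
        (f := fun _ : ℝ => B a) (f' := fun _ : ℝ => (0:ℝ))
        continuousOn_const (fun x _ => hasDerivWithinAt_const x _ (B a))
        (le_refl (B a)) hconB hderB hbound
      exact this (right_mem_Icc.mpr hat)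
    -- unfold B a ≤ B t
    have htq : (0:ℝ) < t ^ q := Real.rpow_pos_of_pos ht _
    have haq : (0:ℝ) < a ^ q := Real.rpow_pos_of_pos ha0 _
    have h1 : Φ a * (a ^ q)⁻¹ ≤ Φ t * (t ^ q)⁻¹ := by
      have := hBmono
      simp only [hB, Real.rpow_neg ha0.le, Real.rpow_neg ht.le] at this
      exact this
    have h2 : Φ a * t ^ q ≤ Φ t * a ^ q := by
      have h3 := mul_le_mul_of_nonneg_right h1 (mul_nonneg haq.le htq.le)
      have e1 : Φ a * (a ^ q)⁻¹ * (a ^ q * t ^ q) = Φ a * t ^ q := by field_simp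
      have e2 : Φ t * (t ^ q)⁻¹ * (a ^ q * t ^ q) = Φ t * a ^ q := by field_simp
      rwa [e1, e2] at h3
    have haqct : a ^ q = c ^ q * t ^ q := Real.mul_rpow hc.le ht.le
    rw [haqct] at h2
    have : Φ a * t ^ q ≤ c ^ q * Φ t * t ^ q := by linarith [h2]
    exact le_of_mul_le_mul_right this htq
  · rintro ⟨p, hp1, hΛ⟩
    have hΦ1 := hpos 1 one_pos
    have hS_ne : S.Nonempty :=
      ⟨1 * derivWithin Φ (Set.Ici 1) 1 / Φ 1, 1, one_pos, rfl⟩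
    refine lt_of_lt_of_le hp1 (le_csInf hS_ne ?_)
    rintro r ⟨t, ht, rfl⟩
    have hΦt := hpos t ht
    have htp : (0:ℝ) < t ^ p := Real.rpow_pos_of_pos ht _
    rw [le_div_iff₀ hΦt]
    -- auxiliary function h u := Φ t / t ^ p * u ^ p
    set g : ℝ → ℝ := fun u => Φ t / t ^ p * u ^ p with hg
    have hgd : HasDerivAt g (p * Φ t / t) t := by
      have h1 : HasDerivAt (fun u : ℝ => u ^ p) (p * t ^ (p - 1)) t :=
        Real.hasDerivAt_rpow_const (Or.inl ht.ne')
      have h2 := h1.const_mul (Φ t / t ^ p)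
      refine h2.congr_deriv ?_
      rw [Real.rpow_sub_one ht.ne']
      field_simp
    have hgslope : Tendsto (slope g t) (𝓝[>] t) (𝓝 (p * Φ t / t)) := by
      have h := (hgd.hasDerivWithinAt (s := Set.Ici t))
      rw [hasDerivWithinAt_iff_tendsto_slope, Set.Ici_sdiff_left] at h
      exact h
    have hle : ∀ᶠ u in 𝓝[>] t, slope g t u ≤ slope Φ t u := by
      filter_upwards [self_mem_nhdsWithin] with u hu
      have hu0 : 0 < u := ht.trans hu
      have hup : (0:ℝ) < u ^ p := Real.rpow_pos_of_pos hu0 _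
      have hgu : g u ≤ Φ u := by
        have hc1 : t / u ≤ 1 := (div_le_one hu0).mpr (le_of_lt hu)
        have := hΛ u hu0.le (t / u) (div_pos ht hu0) hc1
        rw [div_mul_cancel₀ _ hu0.ne'] at this
        rw [Real.div_rpow ht.le hu0.le] at this
        show Φ t / t ^ p * u ^ p ≤ Φ u
        rw [div_mul_eq_mul_div, div_le_iff₀ htp]
        rw [div_mul_eq_mul_div, le_div_iff₀ hup] at this
        linarith
      have hgt : g t = Φ t := by
        show Φ t / t ^ p * t ^ p = Φ t
        field_simp
      rw [slope_def_field, slope_def_field, hgt]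
      have hut : (0:ℝ) < u - t := by
        have : t < u := hu
        linarith
      exact (div_le_div_iff_of_pos_right hut).mpr (by linarith [hgu])
    have hD : p * Φ t / t ≤ derivWithin Φ (Set.Ici t) t :=
      le_of_tendsto_of_tendsto hgslope (young_tendsto_slope hconv ht) hle
    rw [div_le_iff₀ ht] at hD
    linarith
end

section
/- Let Φ be a Young function, finite-valued and nonzero outside the origin. Suppose there exist p, q > 1 and 0 < R₁ ≤ R₂ such that t ↦ Φ(t)/t^p is non-decreasing on (0,R₁) and t ↦ Φ(t)/t^q is non-decreasing on (R₂,∞). Then q_Φ = inf_{t>0} tΦ'₊(t)/Φ(t) > 1. -/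
open Filter Set

/-- A convex function on `Ici 0` is right-differentiable at every `t > 0`, and its right
derivative dominates every slope from the left. -/
lemma slope_le_derivWithin_Ici_aux (Φ : ℝ → ℝ) (hconv : ConvexOn ℝ (Set.Ici 0) Φ)
    {s t : ℝ} (hs : 0 ≤ s) (hst : s < t) :
    (Φ t - Φ s) / (t - s) ≤ derivWithin Φ (Set.Ici t) t := by
  have ht : (0:ℝ) < t := lt_of_le_of_lt hs hst
  have hsub : Set.Ioi t ⊆ Set.Ici (0:ℝ) \ {t} := fun y hy =>
    ⟨le_of_lt (ht.trans hy), ne_of_gt hy⟩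
  have hmono : MonotoneOn (slope Φ t) (Set.Ioi t) :=
    (hconv.slope_mono ht.le).mono hsub
  have hsmem : s ∈ Set.Ici (0:ℝ) \ {t} := ⟨hs, hst.ne⟩
  have hbdd : BddBelow (slope Φ t '' Set.Ioi t) := by
    refine ⟨slope Φ t s, ?_⟩
    rintro r ⟨y, hy, rfl⟩
    exact hconv.slope_mono ht.le hsmem (hsub hy) (hst.le.trans (le_of_lt hy))
  have htend := hmono.tendsto_nhdsGT hbdd
  set L := sInf (slope Φ t '' Set.Ioi t) with hL
  have hder : HasDerivWithinAt Φ L (Set.Ici t) t := by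
    rw [hasDerivWithinAt_iff_tendsto_slope, Set.Ici_sdiff_left]
    exact htend
  have hdw : derivWithin Φ (Set.Ici t) t = L :=
    hder.derivWithin (uniqueDiffOn_Ici t t Set.self_mem_Ici)
  rw [hdw]
  have hne : (slope Φ t '' Set.Ioi t).Nonempty :=
    ⟨slope Φ t (t+1), ⟨t+1, by simp, rfl⟩⟩
  have heq : (Φ t - Φ s) / (t - s) = slope Φ t s := by
    rw [slope_comm, slope_def_field]
  rw [heq, hL]
  refine le_csInf hne ?_
  rintro r ⟨y, hy, rfl⟩
  exact hconv.slope_mono ht.le hsmem (hsub hy) (hst.le.trans (le_of_lt hy))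

set_option maxHeartbeats 2000000 in
/-- For a Young function `Φ`, finite and nonzero outside the origin:
if there are `p, q > 1` and `0 < R₁ ≤ R₂` such that `t ↦ Φ(t)/t^p` is
non-decreasing on `(0,R₁)` and `t ↦ Φ(t)/t^q` is non-decreasing on `(R₂,∞)`,
then `q_Φ = inf_{t>0} t Φ'₊(t)/Φ(t) > 1`. -/
theorem qPhi_gt_one_of_local_monotone (Φ : ℝ → ℝ)
    (hconv : ConvexOn ℝ (Set.Ici 0) Φ) (h0 : Φ 0 = 0)
    (hnn : ∀ t, 0 ≤ t → 0 ≤ Φ t) (hlim : Tendsto Φ atTop atTop)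
    (hpos : ∀ t, 0 < t → 0 < Φ t)
    (p q R₁ R₂ : ℝ) (hp : 1 < p) (hq : 1 < q) (hR₁ : 0 < R₁) (hR : R₁ ≤ R₂)
    (hmono₀ : ∀ t₁ t₂ : ℝ, 0 < t₁ → t₁ ≤ t₂ → t₂ < R₁ →
      Φ t₁ / t₁ ^ p ≤ Φ t₂ / t₂ ^ p)
    (hmonoInf : ∀ t₁ t₂ : ℝ, R₂ < t₁ → t₁ ≤ t₂ →
      Φ t₁ / t₁ ^ q ≤ Φ t₂ / t₂ ^ q) :
    1 < sInf {r : ℝ | ∃ t : ℝ, 0 < t ∧ r = t * derivWithin Φ (Set.Ici t) t / Φ t} := by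
  have hR₂ : 0 < R₂ := lt_of_lt_of_le hR₁ hR
  -- monotonicity of Φ on [0,∞)
  have hΦmono : ∀ a b : ℝ, 0 ≤ a → a ≤ b → Φ a ≤ Φ b := by
    intro a b ha hab
    rcases eq_or_lt_of_le hab with rfl | hab'
    · exact le_rfl
    · have hb : 0 < b := lt_of_le_of_lt ha hab'
      have hμ : 0 ≤ a / b := div_nonneg ha hb.le
      have hμ1 : a / b ≤ 1 := (div_le_one hb).mpr hab
      have key := hconv.2 (Set.self_mem_Ici) (show b ∈ Set.Ici (0:ℝ) from hb.le)
        (by linarith : (0:ℝ) ≤ 1 - a / b) hμ (by ring)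
      simp only [smul_eq_mul, mul_zero, zero_add, h0] at key
      rw [div_mul_cancel₀ a hb.ne'] at key
      nlinarith [hnn b hb.le]
  -- the constants for the outer regions
  have h2p : (1/2:ℝ) ^ p < 1/2 := by
    have := Real.rpow_lt_rpow_of_exponent_gt (by norm_num : (0:ℝ) < 1/2)
      (by norm_num : (1/2:ℝ) < 1) hp
    rwa [Real.rpow_one] at this
  have h2q : (1/2:ℝ) ^ q < 1/2 := by
    have := Real.rpow_lt_rpow_of_exponent_gt (by norm_num : (0:ℝ) < 1/2)
      (by norm_num : (1/2:ℝ) < 1) hq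
    rwa [Real.rpow_one] at this
  set c₁ := 2 * (1 - (1/2:ℝ) ^ p) with hc₁def
  set c₂ := 2 * (1 - (1/2:ℝ) ^ q) with hc₂def
  have hc₁ : 1 < c₁ := by rw [hc₁def]; linarith
  have hc₂ : 1 < c₂ := by rw [hc₂def]; linarith
  -- construction of the auxiliary small point s₀
  have hΦR₁ : 0 < Φ R₁ := hpos R₁ hR₁
  have hΦhalf : 0 < Φ (R₁/2) := hpos _ (by linarith)
  set K := Φ R₁ / (4*R₂) with hK
  have hKpos : 0 < K := div_pos hΦR₁ (by linarith)
  set M := (R₁/2) * K / Φ (R₁/2) with hM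
  have hMpos : 0 < M := by
    apply div_pos _ hΦhalf
    exact mul_pos (by linarith) hKpos
  set x := min 1 (M ^ (1/(p-1))) with hx
  have hxpos : 0 < x := lt_min one_pos (Real.rpow_pos_of_pos hMpos _)
  have hx1 : x ≤ 1 := min_le_left _ _
  have hxpm : x ^ (p-1) ≤ M := by
    calc x ^ (p-1) ≤ (M ^ (1/(p-1))) ^ (p-1) :=
          Real.rpow_le_rpow hxpos.le (min_le_right _ _) (by linarith)
      _ = M := by
          rw [← Real.rpow_mul hMpos.le, one_div_mul_cancel (by linarith : p - 1 ≠ 0),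
            Real.rpow_one]
  set s₀ := (R₁/2) * x with hs₀
  have hs₀pos : 0 < s₀ := mul_pos (by linarith) hxpos
  have hs₀le : s₀ ≤ R₁/2 := by
    rw [hs₀]; nlinarith
  have hΦs₀ : Φ s₀ ≤ s₀ * K := by
    have h1 := hmono₀ s₀ (R₁/2) hs₀pos hs₀le (by linarith)
    have hhp : (0:ℝ) < (R₁/2) ^ p := Real.rpow_pos_of_pos (by linarith) p
    have hsp : (0:ℝ) < s₀ ^ p := Real.rpow_pos_of_pos hs₀pos p
    rw [div_le_div_iff₀ hsp hhp] at h1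
    have hxp : s₀ ^ p = (R₁/2) ^ p * x ^ p := Real.mul_rpow (by linarith) hxpos.le
    have hxsplit : x ^ p = x ^ (p-1) * x := by
      rw [show p = (p-1) + 1 by ring, Real.rpow_add_one hxpos.ne']
      ring_nf
    have hM1 : Φ (R₁/2) * M = (R₁/2) * K := by
      rw [hM]; field_simp
    have h2 : Φ s₀ * (R₁/2) ^ p ≤ (s₀ * K) * (R₁/2) ^ p := by
      calc Φ s₀ * (R₁/2) ^ p ≤ Φ (R₁/2) * s₀ ^ p := h1
        _ = (Φ (R₁/2) * x ^ (p-1)) * x * (R₁/2) ^ p := by rw [hxp, hxsplit]; ring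
        _ ≤ (Φ (R₁/2) * M) * x * (R₁/2) ^ p := by
            have hstep : Φ (R₁/2) * x ^ (p-1) ≤ Φ (R₁/2) * M :=
              mul_le_mul_of_nonneg_left hxpm hΦhalf.le
            have : 0 ≤ x * (R₁/2) ^ p := mul_nonneg hxpos.le hhp.le
            nlinarith
        _ = (s₀ * K) * (R₁/2) ^ p := by rw [hM1, hs₀]; ring
    exact le_of_mul_le_mul_right h2 hhp
  set ε := s₀ / (4*R₂) with hε
  have hεpos : 0 < ε := div_pos hs₀pos (by linarith)
  have hε8 : ε ≤ 1/8 := by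
    rw [hε, div_le_iff₀ (by linarith : (0:ℝ) < 4*R₂)]
    linarith [hs₀le, hR]
  have hΦs₀' : Φ s₀ ≤ ε * Φ R₁ := by
    refine hΦs₀.trans (le_of_eq ?_)
    rw [hK, hε]; ring
  have hden : 0 < 2*R₂ - s₀ := by linarith [hs₀le, hR]
  set c₃ := (1-ε) * (2*R₂) / (2*R₂ - s₀) with hc₃def
  have hc₃ : 1 < c₃ := by
    rw [hc₃def, lt_div_iff₀ hden]
    have hε2 : ε * (4*R₂) = s₀ := by
      rw [hε]; field_simp
    nlinarith
  set c := min c₁ (min c₂ c₃) with hc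
  have hcgt : 1 < c := lt_min hc₁ (lt_min hc₂ hc₃)
  have hsetne : {r : ℝ | ∃ t : ℝ, 0 < t ∧
      r = t * derivWithin Φ (Set.Ici t) t / Φ t}.Nonempty :=
    ⟨1 * derivWithin Φ (Set.Ici 1) 1 / Φ 1, 1, one_pos, rfl⟩
  refine lt_of_lt_of_le hcgt (le_csInf hsetne ?_)
  rintro r ⟨t, ht, rfl⟩
  have hA : 0 < Φ t := hpos t ht
  rw [le_div_iff₀ hA]
  set D := derivWithin Φ (Set.Ici t) t with hD
  rcases lt_or_ge t R₁ with hcase1 | h1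
  · -- region (0, R₁)
    have hhalf : (0:ℝ) < t/2 := by linarith
    have hslope := slope_le_derivWithin_Ici_aux Φ hconv hhalf.le (by linarith [ht] : t/2 < t)
    rw [show t - t/2 = t/2 by ring, div_le_iff₀ hhalf] at hslope
    have hBle : Φ (t/2) ≤ Φ t * (1/2) ^ p := by
      have h1' := hmono₀ (t/2) t hhalf (by linarith) hcase1
      have htp : (0:ℝ) < t ^ p := Real.rpow_pos_of_pos ht p
      have hhp2 : (0:ℝ) < (t/2) ^ p := Real.rpow_pos_of_pos hhalf p
      have h2 : (t/2) ^ p = t ^ p * (1/2) ^ p := by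
        rw [show t/2 = t * (1/2) by ring, Real.mul_rpow ht.le (by norm_num)]
      rw [div_le_div_iff₀ hhp2 htp, h2] at h1'
      nlinarith
    have hcle : c ≤ c₁ := min_le_left _ _
    nlinarith [hnn (t/2) hhalf.le]
  rcases le_or_gt t (2*R₂) with hcase2 | hcase3
  · -- region [R₁, 2R₂]
    have hts : s₀ < t := by linarith
    have hslope := slope_le_derivWithin_Ici_aux Φ hconv hs₀pos.le hts
    rw [div_le_iff₀ (by linarith : (0:ℝ) < t - s₀)] at hslope
    have hAR : Φ R₁ ≤ Φ t := hΦmono R₁ t hR₁.le h1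
    have haε : Φ s₀ ≤ ε * Φ t := hΦs₀'.trans (by nlinarith)
    have hcle : c ≤ c₃ := le_trans (min_le_right _ _) (min_le_right _ _)
    have step1 : (1-ε) * t * Φ t ≤ t * D * (t - s₀) := by
      have w1 := mul_le_mul_of_nonneg_left haε ht.le
      have w2 := mul_le_mul_of_nonneg_left hslope ht.le
      nlinarith
    have step2 : c₃ * (t - s₀) ≤ (1-ε) * t := by
      rw [hc₃def, div_mul_eq_mul_div, div_le_iff₀ hden]
      nlinarith [mul_nonneg (mul_nonneg (by linarith [hε8] : (0:ℝ) ≤ 1-ε) hs₀pos.le)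
        (by linarith : (0:ℝ) ≤ 2*R₂ - t)]
    have step3 : c * Φ t * (t - s₀) ≤ t * D * (t - s₀) := by
      have w3 := mul_le_mul_of_nonneg_right step2 hA.le
      have w4 : (c₃ - c) * (Φ t * (t - s₀)) ≥ 0 :=
        mul_nonneg (by linarith) (mul_nonneg hA.le (by linarith))
      nlinarith
    exact le_of_mul_le_mul_right step3 (by linarith)
  · -- region (2R₂, ∞)
    have hhalf : (0:ℝ) < t/2 := by linarith
    have hslope := slope_le_derivWithin_Ici_aux Φ hconv hhalf.le (by linarith [ht] : t/2 < t)
    rw [show t - t/2 = t/2 by ring, div_le_iff₀ hhalf] at hslope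
    have hBle : Φ (t/2) ≤ Φ t * (1/2) ^ q := by
      have h1' := hmonoInf (t/2) t (by linarith) (by linarith)
      have htp : (0:ℝ) < t ^ q := Real.rpow_pos_of_pos ht q
      have hhp2 : (0:ℝ) < (t/2) ^ q := Real.rpow_pos_of_pos hhalf q
      have h2 : (t/2) ^ q = t ^ q * (1/2) ^ q := by
        rw [show t/2 = t * (1/2) by ring, Real.mul_rpow ht.le (by norm_num)]
      rw [div_le_div_iff₀ hhp2 htp, h2] at h1'
      nlinarith
    have hcle : c ≤ c₂ := le_trans (min_le_right _ _) (min_le_left _ _)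
    nlinarith [hnn (t/2) hhalf.le]
end

section
/- Let Φ be a finite-valued Young function, nonzero outside the origin, with q_Φ > 1. Then the function Ψ(t) = ∫₀ᵗ Φ(t−s)·e^{−s} ds satisfies Ψ(t) ≤ Φ(t) for all t ≥ 0, and Φ₁ := Φ + Ψ is a strictly convex Young function equivalent to Φ. -/
open Filter Set intervalIntegral

/-- If `Φ` is a finite Young function, nonzero outside the origin, with
`q_Φ > 1`, then `Ψ(t) = ∫₀ᵗ Φ(t-s) e^{-s} ds` satisfies `Ψ ≤ Φ`, and
`Φ₁ = Φ + Ψ` is a strictly convex Young function equivalent to `Φ`. -/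
theorem strictly_convex_equivalent (Φ : ℝ → ℝ)
    (hconv : ConvexOn ℝ (Set.Ici 0) Φ) (h0 : Φ 0 = 0)
    (hnn : ∀ t, 0 ≤ t → 0 ≤ Φ t) (hlim : Tendsto Φ atTop atTop)
    (hpos : ∀ t, 0 < t → 0 < Φ t)
    (hq : 1 < sInf {r : ℝ | ∃ t : ℝ, 0 < t ∧ r = t * derivWithin Φ (Set.Ici t) t / Φ t})
    (Ψ : ℝ → ℝ) (hΨ : ∀ t : ℝ, Ψ t = ∫ s in (0 : ℝ)..t, Φ (t - s) * Real.exp (-s)) :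
    (∀ t, 0 ≤ t → Ψ t ≤ Φ t) ∧
    StrictConvexOn ℝ (Set.Ici 0) (fun t => Φ t + Ψ t) ∧
    (fun t => Φ t + Ψ t) 0 = 0 ∧
    Tendsto (fun t => Φ t + Ψ t) atTop atTop ∧
    (∃ C : ℝ, 1 ≤ C ∧ ∀ t, 0 ≤ t →
      C⁻¹ * Φ t ≤ Φ t + Ψ t ∧ Φ t + Ψ t ≤ C * Φ t) := by
  -- Φ is monotone on [0, ∞)
  have hmono : MonotoneOn Φ (Ici 0) := by
    intro p hp q hq' hpq
    rcases eq_or_lt_of_le hpq with rfl | hlt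
    · exact le_rfl
    · have hq0 : 0 < q := lt_of_le_of_lt hp hlt
      have ha1 : (0:ℝ) ≤ 1 - p / q := by
        have : p / q ≤ 1 := (div_le_one hq0).2 hpq
        linarith
      have ha2 : (0:ℝ) ≤ p / q := div_nonneg hp hq0.le
      have ha3 : (1 - p / q) + p / q = 1 := by ring
      have key := hconv.2 (mem_Ici.2 (le_refl (0:ℝ))) hq' ha1 ha2 ha3
      have heq : (1 - p / q) • (0:ℝ) + (p / q) • q = p := by
        field_simp
        simp [hq0.ne']
      rw [heq] at key
      have h1 : (1 - p / q) • Φ 0 + (p / q) • Φ q = (p / q) * Φ q := by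
        rw [h0]; simp [smul_eq_mul]
      rw [h1] at key
      have h2 : (p / q) * Φ q ≤ 1 * Φ q := by
        apply mul_le_mul_of_nonneg_right _ (hnn q hq0.le)
        exact (div_le_one hq0).2 hpq
      linarith
  -- extended function h
  set h : ℝ → ℝ := fun t => Φ (max t 0) with hh_def
  have hmax : ∀ t : ℝ, (0:ℝ) ≤ max t 0 := fun t => le_max_right t 0
  have hh_mono : Monotone h := fun p q hpq =>
    hmono (hmax p) (hmax q) (max_le_max hpq le_rfl)
  have hh_eq : ∀ t : ℝ, 0 ≤ t → h t = Φ t := by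
    intro t ht; simp [hh_def, max_eq_left ht]
  have hh_zero : ∀ t : ℝ, t ≤ 0 → h t = 0 := by
    intro t ht; simp [hh_def, max_eq_right ht, h0]
  have hh_conv : ∀ x y a b : ℝ, 0 ≤ a → 0 ≤ b → a + b = 1 →
      h (a * x + b * y) ≤ a * h x + b * h y := by
    intro x y a b ha hb hab
    have h1 : max (a * x + b * y) 0 ≤ a * max x 0 + b * max y 0 := by
      apply max_le
      · have := le_max_left x 0
        have := le_max_left y 0
        nlinarith [hmax x, hmax y]
      · positivity
    have h2 : Φ (max (a * x + b * y) 0) ≤ Φ (a * max x 0 + b * max y 0) :=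
      hmono (hmax _) (mem_Ici.2 (by positivity)) h1
    have h3 := hconv.2 (hmax x) (hmax y) ha hb hab
    simp only [smul_eq_mul] at h3
    exact le_trans h2 h3
  -- integrability
  have hint : ∀ c p q : ℝ,
      IntervalIntegrable (fun s => h (c - s) * Real.exp (-s)) MeasureTheory.volume p q := by
    intro c p q
    apply IntervalIntegrable.mul_continuousOn
    · apply AntitoneOn.intervalIntegrable
      intro u _ v _ huv
      exact hh_mono (by linarith : c - v ≤ c - u)
    · exact (Real.continuous_exp.comp continuous_neg).continuousOn
  -- Ψ in terms of h, up to any T ≥ t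
  have hΨT : ∀ t T : ℝ, 0 ≤ t → t ≤ T →
      Ψ t = ∫ s in (0:ℝ)..T, h (t - s) * Real.exp (-s) := by
    intro t T ht htT
    have e1 : Ψ t = ∫ s in (0:ℝ)..t, h (t - s) * Real.exp (-s) := by
      rw [hΨ]
      apply intervalIntegral.integral_congr
      intro s hs
      rw [uIcc_of_le ht] at hs
      have : h (t - s) = Φ (t - s) := hh_eq _ (by linarith [hs.1, hs.2] : (0:ℝ) ≤ t - s)
      simp [this]
    have e2 : (∫ s in t..T, h (t - s) * Real.exp (-s)) = 0 := by
      have : EqOn (fun s => h (t - s) * Real.exp (-s)) (fun _ => (0:ℝ)) (uIcc t T) := by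
        intro s hs
        rw [uIcc_of_le htT] at hs
        simp [hh_zero _ (by linarith [hs.1] : t - s ≤ 0)]
      rw [intervalIntegral.integral_congr this, intervalIntegral.integral_zero]
    rw [← intervalIntegral.integral_add_adjacent_intervals (hint t 0 t) (hint t t T), e2,
      add_zero, ← e1]
  -- Ψ nonneg
  have hΨnn : ∀ t, 0 ≤ t → 0 ≤ Ψ t := by
    intro t ht
    rw [hΨ]
    apply intervalIntegral.integral_nonneg ht
    intro s hs
    exact mul_nonneg (hnn _ (by linarith [hs.1, hs.2])) (Real.exp_nonneg _)
  -- Ψ ≤ Φ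
  have hΨle : ∀ t, 0 ≤ t → Ψ t ≤ Φ t := by
    intro t ht
    rw [hΨT t t ht le_rfl]
    have step1 : (∫ s in (0:ℝ)..t, h (t - s) * Real.exp (-s))
        ≤ ∫ s in (0:ℝ)..t, Φ t * Real.exp (-s) := by
      apply intervalIntegral.integral_mono_on ht (hint t 0 t)
      · exact (continuous_const.mul (Real.continuous_exp.comp continuous_neg)).intervalIntegrable 0 t
      · intro s hs
        apply mul_le_mul_of_nonneg_right _ (Real.exp_nonneg _)
        have : max (t - s) 0 ≤ t := max_le (by linarith [hs.1]) ht
        exact hmono (hmax _) (mem_Ici.2 ht) this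
    have step2 : (∫ s in (0:ℝ)..t, Φ t * Real.exp (-s)) = Φ t * (1 - Real.exp (-t)) := by
      rw [intervalIntegral.integral_const_mul]
      congr 1
      have : (∫ s in (0:ℝ)..t, Real.exp (-s)) = ∫ s in (-t)..(-(0:ℝ)), Real.exp s :=
        intervalIntegral.integral_comp_neg (fun s => Real.exp s)
      rw [this, integral_exp]
      simp
    have step3 : Φ t * (1 - Real.exp (-t)) ≤ Φ t := by
      nlinarith [hnn t ht, Real.exp_nonneg (-t)]
    linarith
  -- strict convexity key inequality
  have key : ∀ x y a b : ℝ, x ∈ Ici (0:ℝ) → y ∈ Ici (0:ℝ) → x < y → 0 < a → 0 < b →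
      a + b = 1 → Φ (a * x + b * y) + Ψ (a * x + b * y)
        < a * (Φ x + Ψ x) + b * (Φ y + Ψ y) := by
    intro x y a b hx hy hxy ha hb hab
    set z := a * x + b * y with hz_def
    have hz1 : z = x + b * (y - x) := by
      simp only [hz_def]; linear_combination x * hab
    have hz2 : z = y - a * (y - x) := by
      simp only [hz_def]; linear_combination y * hab
    have hxz : x < z := by
      rw [hz1]; linarith [mul_pos hb (sub_pos.2 hxy)]
    have hzy : z < y := by
      rw [hz2]; linarith [mul_pos ha (sub_pos.2 hxy)]
    have hz0 : 0 ≤ z := le_trans hx hxz.le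
    have hy0 : 0 ≤ y := hy
    set G : ℝ → ℝ := fun s => a * (h (x - s) * Real.exp (-s)) + b * (h (y - s) * Real.exp (-s))
      - h (z - s) * Real.exp (-s) with hG_def
    have hGint : ∀ p q : ℝ, IntervalIntegrable G MeasureTheory.volume p q := fun p q =>
      (((hint x p q).const_mul a).add ((hint y p q).const_mul b)).sub (hint z p q)
    have hGnn : ∀ s, 0 ≤ G s := by
      intro s
      have hc := hh_conv (x - s) (y - s) a b ha.le hb.le hab
      have hzz : z - s = a * (x - s) + b * (y - s) := by
        simp only [hz_def]; linear_combination s * hab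
      rw [← hzz] at hc
      have := mul_le_mul_of_nonneg_right hc (Real.exp_nonneg (-s))
      simp only [hG_def]
      nlinarith [this]
    have hGpos : ∀ s ∈ Ioo z y, 0 < G s := by
      intro s hs
      have h1 : h (x - s) = 0 := hh_zero _ (by linarith [hs.1] : x - s ≤ 0)
      have h2 : h (z - s) = 0 := hh_zero _ (by linarith [hs.1] : z - s ≤ 0)
      have h3 : 0 < h (y - s) := by
        rw [hh_eq _ (by linarith [hs.2] : (0:ℝ) ≤ y - s)]
        exact hpos _ (by linarith [hs.2])
      have : G s = b * (h (y - s) * Real.exp (-s)) := by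
        simp [hG_def, h1, h2]
      rw [this]
      exact mul_pos hb (mul_pos h3 (Real.exp_pos _))
    have hposint : 0 < ∫ s in z..y, G s :=
      intervalIntegral.intervalIntegral_pos_of_pos_on (hGint z y) hGpos hzy
    have h0z : 0 ≤ ∫ s in (0:ℝ)..z, G s :=
      intervalIntegral.integral_nonneg hz0 (fun u _ => hGnn u)
    have hsplit : (∫ s in (0:ℝ)..y, G s) = (∫ s in (0:ℝ)..z, G s) + ∫ s in z..y, G s :=
      (intervalIntegral.integral_add_adjacent_intervals (hGint 0 z) (hGint z y)).symm
    have hGtotal : 0 < ∫ s in (0:ℝ)..y, G s := by rw [hsplit]; linarith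
    have hGeq : (∫ s in (0:ℝ)..y, G s) = a * Ψ x + b * Ψ y - Ψ z := by
      rw [hΨT x y hx hxy.le, hΨT y y hy0 le_rfl, hΨT z y hz0 hzy.le]
      simp only [hG_def]
      rw [intervalIntegral.integral_sub (((hint x 0 y).const_mul a).add ((hint y 0 y).const_mul b))
        (hint z 0 y),
        intervalIntegral.integral_add ((hint x 0 y).const_mul a) ((hint y 0 y).const_mul b),
        intervalIntegral.integral_const_mul, intervalIntegral.integral_const_mul]
    have hΨstrict : Ψ z < a * Ψ x + b * Ψ y := by
      rw [hGeq] at hGtotal; linarith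
    have hΦconv : Φ z ≤ a * Φ x + b * Φ y := by
      have := hconv.2 hx hy ha.le hb.le hab
      simpa [smul_eq_mul] using this
    nlinarith [hΨstrict, hΦconv]
  refine ⟨hΨle, ⟨convex_Ici 0, ?_⟩, ?_, ?_, ⟨2, one_le_two, ?_⟩⟩
  · intro x hx y hy hxy a b ha hb hab
    simp only [smul_eq_mul]
    rcases hxy.lt_or_gt with hlt | hlt
    · have := key x y a b hx hy hlt ha hb hab
      linarith
    · have := key y x b a hy hx hlt hb ha (by linarith)
      have hcomm : b * y + a * x = a * x + b * y := by ring
      rw [hcomm] at this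
      linarith
  · simp only
    rw [h0, hΨ 0, intervalIntegral.integral_same, add_zero]
  · apply tendsto_atTop_mono' atTop _ hlim
    filter_upwards [eventually_ge_atTop (0:ℝ)] with t ht
    linarith [hΨnn t ht]
  · intro t ht
    constructor
    · have h1 := hnn t ht
      have h2 := hΨnn t ht
      rw [show ((2:ℝ))⁻¹ = 1/2 by norm_num]
      linarith
    · linarith [hΨle t ht]
end

section
/- There exists a Young function Φ with q_Φ > 1 which is not strictly convex. Specifically, Φ defined by Φ(t)=2t² for t ≤ 1, Φ(t)=4t−2 for 1 ≤ t ≤ 2, Φ(t)=t²+2 for t ≥ 2 is a Young function, fails to be strictly convex, and satisfies q_Φ = inf_{t>0} tΦ'(t)/Φ(t) = 4/3 > 1. -/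
open Filter Set

private noncomputable def phi' (t : ℝ) : ℝ := if t ≤ 1 then 4*t else if t ≤ 2 then 4 else 2*t

private lemma phi_hasDerivAt (Φ : ℝ → ℝ)
    (hΦ : ∀ t : ℝ, Φ t = if t ≤ 1 then 2 * t ^ 2 else if t ≤ 2 then 4 * t - 2 else t ^ 2 + 2)
    (t : ℝ) : HasDerivAt Φ (phi' t) t := by
  have dsq : ∀ x : ℝ, HasDerivAt (fun y : ℝ => 2 * y ^ 2) (4 * x) x := by
    intro x
    have := (hasDerivAt_pow 2 x).const_mul (2 : ℝ)
    exact this.congr_deriv (by norm_num; ring)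
  have dlin : ∀ x : ℝ, HasDerivAt (fun y : ℝ => 4 * y - 2) 4 x := by
    intro x
    simpa using ((hasDerivAt_id x).const_mul (4:ℝ)).sub_const 2
  have dq : ∀ x : ℝ, HasDerivAt (fun y : ℝ => y ^ 2 + 2) (2 * x) x := by
    intro x
    have := (hasDerivAt_pow 2 x).add_const (2:ℝ)
    exact this.congr_deriv (by norm_num)
  rcases lt_trichotomy t 1 with h1 | h1 | h1
  · have hev : Φ =ᶠ[nhds t] fun y => 2 * y ^ 2 := by
      filter_upwards [Iio_mem_nhds h1] with x hx
      rw [hΦ x, if_pos hx.le]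
    rw [phi', if_pos h1.le]
    exact (dsq t).congr_of_eventuallyEq hev
  · subst h1
    rw [phi', if_pos le_rfl]
    have hleft : HasDerivWithinAt Φ 4 (Iic 1) 1 := by
      have base : HasDerivAt (fun y : ℝ => 2 * y ^ 2) 4 1 := by simpa using dsq 1
      exact base.hasDerivWithinAt.congr (fun x hx => by rw [hΦ x, if_pos (mem_Iic.1 hx)])
        (by rw [hΦ 1]; norm_num)
    have hright : HasDerivWithinAt Φ 4 (Ici 1) 1 := by
      refine (dlin 1).hasDerivWithinAt.congr_of_eventuallyEq ?_ (by rw [hΦ 1]; norm_num)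
      filter_upwards [self_mem_nhdsWithin,
        nhdsWithin_le_nhds (Iio_mem_nhds (by norm_num : (1:ℝ) < 2))] with x hx1 hx2
      rw [hΦ x]
      rcases le_or_gt x 1 with h | h
      · have : x = 1 := le_antisymm h hx1
        subst this; norm_num
      · rw [if_neg (not_le.2 h), if_pos hx2.le]
    have := hleft.union hright
    rw [Iic_union_Ici, hasDerivWithinAt_univ] at this
    simpa using this
  · rcases lt_trichotomy t 2 with h2 | h2 | h2
    · have hev : Φ =ᶠ[nhds t] fun y => 4 * y - 2 := by
        filter_upwards [Ioo_mem_nhds h1 h2] with x hx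
        rw [hΦ x, if_neg (not_le.2 hx.1), if_pos hx.2.le]
      rw [phi', if_neg (not_le.2 h1), if_pos h2.le]
      exact (dlin t).congr_of_eventuallyEq hev
    · subst h2
      rw [phi', if_neg (by norm_num), if_pos le_rfl]
      have hleft : HasDerivWithinAt Φ 4 (Iic 2) 2 := by
        refine (dlin 2).hasDerivWithinAt.congr_of_eventuallyEq ?_ (by rw [hΦ 2]; norm_num)
        filter_upwards [self_mem_nhdsWithin,
          nhdsWithin_le_nhds (Ioi_mem_nhds (by norm_num : (1:ℝ) < 2))] with x hx1 hx2
        rw [hΦ x, if_neg (not_le.2 (mem_Ioi.1 hx2)), if_pos (mem_Iic.1 hx1)]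
      have hright : HasDerivWithinAt Φ 4 (Ici 2) 2 := by
        have base : HasDerivAt (fun y : ℝ => y ^ 2 + 2) 4 2 := by
          have := dq 2; exact this.congr_deriv (by norm_num)
        refine base.hasDerivWithinAt.congr (fun x hx => ?_) (by rw [hΦ 2]; norm_num)
        rw [hΦ x]
        rcases lt_or_eq_of_le (mem_Ici.1 hx) with h | h
        · rw [if_neg (by linarith), if_neg (not_le.2 h)]
        · subst h; norm_num
      have := hleft.union hright
      rw [Iic_union_Ici, hasDerivWithinAt_univ] at this
      exact this
    · have hev : Φ =ᶠ[nhds t] fun y => y ^ 2 + 2 := by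
        filter_upwards [Ioi_mem_nhds h2] with x hx
        rw [hΦ x, if_neg (by linarith [mem_Ioi.1 hx]), if_neg (not_le.2 hx)]
      rw [phi', if_neg (not_le.2 h1), if_neg (not_le.2 h2)]
      exact (dq t).congr_of_eventuallyEq hev

/-- The Young function `Φ(t) = 2t²` on `[0,1]`, `4t-2` on `[1,2]`, `t²+2` on
`[2,∞)` is convex but not strictly convex, and `q_Φ = 4/3 > 1`. -/
theorem exists_not_strictly_convex_qPhi_gt_one
    (Φ : ℝ → ℝ)
    (hΦ : ∀ t : ℝ, Φ t = if t ≤ 1 then 2 * t ^ 2 else if t ≤ 2 then 4 * t - 2 else t ^ 2 + 2) :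
    ConvexOn ℝ (Set.Ici 0) Φ ∧ Φ 0 = 0 ∧ Tendsto Φ atTop atTop ∧
    ¬ StrictConvexOn ℝ (Set.Ici 0) Φ ∧
    sInf {r : ℝ | ∃ t : ℝ, 0 < t ∧ r = t * derivWithin Φ (Set.Ici t) t / Φ t} = 4 / 3 ∧
    (1 : ℝ) < 4 / 3 := by
  have hd := phi_hasDerivAt Φ hΦ
  have hcont : Continuous Φ := by
    rw [continuous_iff_continuousAt]
    exact fun t => (hd t).continuousAt
  have hderiv : deriv Φ = phi' := funext fun t => (hd t).deriv
  have hmono : Monotone phi' := by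
    intro a b hab
    unfold phi'
    split_ifs <;> linarith
  refine ⟨?_, ?_, ?_, ?_, ?_, by norm_num⟩
  · refine MonotoneOn.convexOn_of_deriv (convex_Ici 0) hcont.continuousOn
      (fun x _ => (hd x).differentiableAt.differentiableWithinAt) ?_
    rw [hderiv]
    exact hmono.monotoneOn _
  · rw [hΦ 0]; norm_num
  · refine tendsto_atTop_mono' atTop ?_ tendsto_id
    filter_upwards [eventually_ge_atTop (3:ℝ)] with x hx
    rw [hΦ x, if_neg (by linarith), if_neg (by linarith)]
    simp only [id_eq]
    nlinarith
  · intro h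
    have h1 : (1:ℝ) ∈ Ici (0:ℝ) := by norm_num
    have h2 : (2:ℝ) ∈ Ici (0:ℝ) := by norm_num
    have := h.2 h1 h2 (by norm_num) (by norm_num : (0:ℝ) < 1/2)
      (by norm_num : (0:ℝ) < 1/2) (by norm_num)
    simp only [smul_eq_mul] at this
    rw [show (1:ℝ)/2 * 1 + 1/2 * 2 = 3/2 by norm_num, hΦ (3/2), hΦ 1, hΦ 2] at this
    norm_num at this
  · have hA : ∀ t : ℝ, derivWithin Φ (Ici t) t = phi' t := fun t =>
      (hd t).hasDerivWithinAt.derivWithin (uniqueDiffOn_Ici t t Set.self_mem_Ici)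
    refine IsLeast.csInf_eq ⟨⟨2, by norm_num, ?_⟩, ?_⟩
    · rw [hA 2, hΦ 2]
      unfold phi'
      norm_num
    · rintro r ⟨t, ht, rfl⟩
      rw [hA t, hΦ t]
      unfold phi'
      split_ifs with h1 h2
      · rw [le_div_iff₀ (by positivity)]
        nlinarith
      · rw [le_div_iff₀ (by nlinarith [not_le.1 h1])]
        nlinarith [not_le.1 h1]
      · rw [le_div_iff₀ (by positivity)]
        nlinarith [not_le.1 h2]
end

section
/- Let Φ be a Young function, finite-valued and nonzero outside the origin, with q_Φ > 1. Then there exists p > 1 such that Φ(t)/t^p is non-decreasing, lim_{t→0+} Φ(t)/t^p = 0, and lim_{t→∞} Φ(t)/t^p = ∞. -/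
open Filter Set Topology

/-- For a Young function `Φ`, finite and nonzero outside the origin, with
`q_Φ > 1`, there is `p > 1` such that `Φ(t)/t^p` is non-decreasing on `(0,∞)`,
tends to `0` as `t → 0+` and to `∞` as `t → ∞`. -/
theorem qPhi_gt_one_monotone_limits (Φ : ℝ → ℝ)
    (hconv : ConvexOn ℝ (Set.Ici 0) Φ) (h0 : Φ 0 = 0)
    (hnn : ∀ t, 0 ≤ t → 0 ≤ Φ t) (hlim : Tendsto Φ atTop atTop)
    (hpos : ∀ t, 0 < t → 0 < Φ t)
    (hq : 1 < sInf {r : ℝ | ∃ t : ℝ, 0 < t ∧ r = t * derivWithin Φ (Set.Ici t) t / Φ t}) :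
    ∃ p : ℝ, 1 < p ∧
      (∀ t₁ t₂ : ℝ, 0 < t₁ → t₁ ≤ t₂ → Φ t₁ / t₁ ^ p ≤ Φ t₂ / t₂ ^ p) ∧
      Tendsto (fun t => Φ t / t ^ p) (𝓝[>] (0 : ℝ)) (𝓝 0) ∧
      Tendsto (fun t => Φ t / t ^ p) atTop atTop := by
  set S : Set ℝ := {r : ℝ | ∃ t : ℝ, 0 < t ∧ r = t * derivWithin Φ (Set.Ici t) t / Φ t} with hS
  set q : ℝ := sInf S with hqdef
  -- S is bounded below (else sInf S = 0 < 1)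
  have hbdd : BddBelow S := by
    by_contra h
    rw [hqdef, Real.sInf_of_not_bddBelow h] at hq
    linarith
  -- for each t > 0, q ≤ t * Φ'₊(t) / Φ(t)
  have hmem : ∀ t : ℝ, 0 < t → q ≤ t * derivWithin Φ (Set.Ici t) t / Φ t := fun t ht =>
    csInf_le hbdd ⟨t, ht, rfl⟩
  -- Φ is right-differentiable at each t > 0 (otherwise derivWithin = 0, so q ≤ 0)
  have hdiff : ∀ t : ℝ, 0 < t → DifferentiableWithinAt ℝ Φ (Set.Ici t) t := by
    intro t ht
    by_contra h
    have h1 := hmem t ht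
    rw [derivWithin_zero_of_not_differentiableWithinAt h] at h1
    simp at h1
    linarith
  -- the key differential inequality
  have hkey : ∀ e : ℝ, e ≤ q → ∀ t : ℝ, 0 < t →
      e * Φ t ≤ t * derivWithin Φ (Set.Ici t) t := by
    intro e he t ht
    have h1 := le_trans he (hmem t ht)
    have h2 := hpos t ht
    calc e * Φ t ≤ t * derivWithin Φ (Set.Ici t) t / Φ t * Φ t := by
          exact mul_le_mul_of_nonneg_right h1 h2.le
      _ = t * derivWithin Φ (Set.Ici t) t := by field_simp
  -- Φ is continuous on (0, ∞)
  have hcontΦ : ContinuousOn Φ (Set.Ioi 0) :=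
    (hconv.subset Set.Ioi_subset_Ici_self (convex_Ioi 0)).continuousOn isOpen_Ioi
  -- monotonicity of Φ t / t ^ e for any e ≤ q
  have mono : ∀ e : ℝ, e ≤ q → ∀ t₁ t₂ : ℝ, 0 < t₁ → t₁ ≤ t₂ →
      Φ t₁ / t₁ ^ e ≤ Φ t₂ / t₂ ^ e := by
    intro e he t₁ t₂ ht₁ h12
    have ht₂ : 0 < t₂ := lt_of_lt_of_le ht₁ h12
    set h : ℝ → ℝ := fun t => Real.log (Φ t) - e * Real.log t with hh
    have hmono : h t₁ ≤ h t₂ := by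
      have hIcc : Set.Icc t₁ t₂ ⊆ Set.Ioi 0 := fun x hx => lt_of_lt_of_le ht₁ hx.1
      have hcont : ContinuousOn h (Set.Icc t₁ t₂) := by
        apply ContinuousOn.sub
        · exact ContinuousOn.log (hcontΦ.mono hIcc) fun x hx =>
            (hpos x (hIcc hx)).ne'
        · exact continuousOn_const.mul
            (Real.continuousOn_log.mono fun x hx => (hIcc hx).ne')
      have hderiv : ∀ x ∈ Set.Ico t₁ t₂,
          HasDerivWithinAt h (derivWithin Φ (Set.Ici x) x / Φ x - e * x⁻¹)
            (Set.Ici x) x := by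
        intro x hx
        have hx0 : 0 < x := lt_of_lt_of_le ht₁ hx.1
        have h1 : HasDerivWithinAt Φ (derivWithin Φ (Set.Ici x) x) (Set.Ici x) x :=
          (hdiff x hx0).hasDerivWithinAt
        have h2 := h1.log (hpos x hx0).ne'
        have h3 : HasDerivWithinAt (fun t : ℝ => e * Real.log t) (e * x⁻¹)
            (Set.Ici x) x :=
          ((Real.hasDerivAt_log hx0.ne').hasDerivWithinAt).const_mul e
        exact h2.sub h3
      have hbound : ∀ x ∈ Set.Ico t₁ t₂,
          (0 : ℝ) ≤ derivWithin Φ (Set.Ici x) x / Φ x - e * x⁻¹ := by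
        intro x hx
        have hx0 : 0 < x := lt_of_lt_of_le ht₁ hx.1
        have hΦx := hpos x hx0
        rw [sub_nonneg]
        rw [show e * x⁻¹ = e / x by ring, div_le_div_iff₀ hx0 hΦx]
        linarith [hkey e he x hx0]
      have := image_le_of_deriv_right_le_deriv_boundary
        (f := fun _ : ℝ => h t₁) (f' := fun _ : ℝ => (0 : ℝ))
        (a := t₁) (b := t₂)
        continuousOn_const (fun x _ => hasDerivWithinAt_const x _ _)
        (le_refl (h t₁)) hcont hderiv hbound
      exact this (Set.right_mem_Icc.2 h12)
    -- translate back
    have e1 : Real.log (Φ t₁ / t₁ ^ e) ≤ Real.log (Φ t₂ / t₂ ^ e) := by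
      rw [Real.log_div (hpos t₁ ht₁).ne' (Real.rpow_pos_of_pos ht₁ e).ne',
        Real.log_div (hpos t₂ ht₂).ne' (Real.rpow_pos_of_pos ht₂ e).ne',
        Real.log_rpow ht₁, Real.log_rpow ht₂]
      exact hmono
    have p1 : 0 < Φ t₁ / t₁ ^ e := div_pos (hpos t₁ ht₁) (Real.rpow_pos_of_pos ht₁ e)
    have p2 : 0 < Φ t₂ / t₂ ^ e := div_pos (hpos t₂ ht₂) (Real.rpow_pos_of_pos ht₂ e)
    exact (Real.log_le_log_iff p1 p2).1 e1
  -- choose p strictly between 1 and q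
  refine ⟨(1 + q) / 2, by linarith, mono _ (by linarith), ?_, ?_⟩
  · -- limit at 0⁺
    set p : ℝ := (1 + q) / 2 with hp
    have hqp : 0 < q - p := by simp only [hp]; linarith
    have hub : ∀ t ∈ Set.Ioo (0 : ℝ) 1, Φ t / t ^ p ≤ Φ 1 * t ^ (q - p) := by
      intro t ht
      have ht0 := ht.1
      have h1 : Φ t / t ^ q ≤ Φ 1 / (1 : ℝ) ^ q := mono q le_rfl t 1 ht0 ht.2.le
      rw [Real.one_rpow, div_one] at h1
      have h2 : Φ t / t ^ p = Φ t / t ^ q * t ^ (q - p) := by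
        rw [Real.rpow_sub ht0]
        field_simp
      rw [h2]
      exact mul_le_mul_of_nonneg_right h1 (Real.rpow_pos_of_pos ht0 _).le
    have hg0 : Tendsto (fun t : ℝ => Φ 1 * t ^ (q - p)) (𝓝[>] (0 : ℝ)) (𝓝 0) := by
      have : ContinuousAt (fun t : ℝ => t ^ (q - p)) 0 :=
        Real.continuousAt_rpow_const 0 (q - p) (Or.inr hqp.le)
      have h1 : Tendsto (fun t : ℝ => t ^ (q - p)) (𝓝[>] (0 : ℝ)) (𝓝 0) := by
        have := this.tendsto.mono_left (nhdsWithin_le_nhds (s := Set.Ioi (0:ℝ)))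
        rwa [Real.zero_rpow hqp.ne'] at this
      simpa using h1.const_mul (Φ 1)
    apply squeeze_zero' ?_ ?_ hg0
    · filter_upwards [self_mem_nhdsWithin] with t ht
      exact (div_pos (hpos t ht) (Real.rpow_pos_of_pos ht _)).le
    · filter_upwards [Ioo_mem_nhdsGT_of_mem (Set.left_mem_Ico.2 one_pos)] with t ht
      exact hub t ht
  · -- limit at ∞
    set p : ℝ := (1 + q) / 2 with hp
    have hqp : 0 < q - p := by simp only [hp]; linarith
    have hlb : ∀ t : ℝ, 1 ≤ t → Φ 1 * t ^ (q - p) ≤ Φ t / t ^ p := by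
      intro t ht
      have ht0 : (0 : ℝ) < t := lt_of_lt_of_le one_pos ht
      have h1 : Φ 1 / (1 : ℝ) ^ q ≤ Φ t / t ^ q := mono q le_rfl 1 t one_pos ht
      rw [Real.one_rpow, div_one] at h1
      have h2 : Φ t / t ^ p = Φ t / t ^ q * t ^ (q - p) := by
        rw [Real.rpow_sub ht0]
        field_simp
      rw [h2]
      exact mul_le_mul_of_nonneg_right h1 (Real.rpow_pos_of_pos ht0 _).le
    have hg : Tendsto (fun t : ℝ => Φ 1 * t ^ (q - p)) atTop atTop :=
      (tendsto_rpow_atTop hqp).const_mul_atTop (hpos 1 one_pos)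
    exact tendsto_atTop_mono' atTop
      (eventually_atTop.2 ⟨1, fun t ht => hlb t ht⟩) hg
end
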